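/- Let λ and μ be partitions and let Q, T, x be invertible elements of K, with q = Q² and t = T². Then N_{λ,μ}((Q/T)·x) = N_{μ,λ}((Q/T)·x^{−1}) · x^{|λ|+|μ|} · f_λ · f_μ^{−1}. -/

import Mathlib

open Finset

noncomputable section

/-- The conjugate partition value `λ'_j`, computed using rows `1,…,L`
(correct whenever `L ≥ ℓ(λ)`). -/
def conjP (lam : ℕ → ℕ) (L j : ℕ) : ℕ :=
  ((Finset.Icc 1 L).filter (fun k => j ≤ lam k)).card

/-- `|λ| = Σ_i λ_i`, computed using rows `1,…,L`. -/
def sizeP (lam : ℕ → ℕ) (L : ℕ) : ℕ := ∑ i ∈ Finset.Icc 1 L, lam i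

/-- `n(λ) = Σ_{i≥1} (i-1) λ_i`, computed using rows `1,…,L`. -/
def nP (lam : ℕ → ℕ) (L : ℕ) : ℕ := ∑ i ∈ Finset.Icc 1 L, (i - 1) * lam i

/-- `n(λ') = Σ_{j≥1} (j-1) λ'_j`, computed using rows `1,…,L`. -/
def nconj (lam : ℕ → ℕ) (L : ℕ) : ℕ :=
  ∑ j ∈ Finset.Icc 1 (lam 1), (j - 1) * conjP lam L j

/-- The Nekrasov factor `N_{λ,μ}(u)`, computed using rows `1,…,L`. -/
def Nek {K : Type*} [Field K] (q t : K) (lam mu : ℕ → ℕ) (L : ℕ) (u : K) : K :=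
  (∏ i ∈ Finset.Icc 1 L, ∏ j ∈ Finset.Icc 1 (lam i),
    (1 - u * q ^ (-(mu i : ℤ) + (j : ℤ) - 1) * t ^ (-(conjP lam L j : ℤ) + (i : ℤ)))) *
  ∏ k ∈ Finset.Icc 1 L, ∏ l ∈ Finset.Icc 1 (mu k),
    (1 - u * q ^ ((lam k : ℤ) - (l : ℤ)) * t ^ ((conjP mu L l : ℤ) - (k : ℤ) + 1))

/-- The framing factor `f_λ = (-1)^{|λ|} q^{n(λ')} Q^{|λ|} t^{-n(λ)} T^{-|λ|}`,
where `Q² = q` and `T² = t`. -/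
def framing {K : Type*} [Field K] (q t Q T : K) (lam : ℕ → ℕ) (L : ℕ) : K :=
  (-1 : K) ^ sizeP lam L * q ^ nconj lam L * Q ^ sizeP lam L *
    t ^ (-(nP lam L : ℤ)) * T ^ (-(sizeP lam L : ℤ))

/-! ### Auxiliary lemmas -/

section Aux

variable {K : Type*} [Field K]

lemma anti_aux (lam : ℕ → ℕ) (hmono : ∀ k, 1 ≤ k → lam (k + 1) ≤ lam k) :
    ∀ i k, 1 ≤ i → i ≤ k → lam k ≤ lam i := by
  intro i k hi hik
  induction k with
  | zero => omega
  | succ n ih =>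
    rcases Nat.lt_or_ge n i with h | h
    · have : i = n + 1 := by omega
      subst this; exact le_refl _
    · exact le_trans (hmono n (by omega)) (ih (by omega))

lemma downclosed_eq_Icc (S : Finset ℕ) (h1 : ∀ i ∈ S, 1 ≤ i)
    (hdc : ∀ k ∈ S, ∀ i, 1 ≤ i → i ≤ k → i ∈ S) : S = Finset.Icc 1 S.card := by
  rcases S.eq_empty_or_nonempty with h | h
  · simp [h]
  · have hmax := S.max'_mem h
    have hS : S = Finset.Icc 1 (S.max' h) := by
      ext i
      simp only [Finset.mem_Icc]
      constructor
      · intro hi; exact ⟨h1 i hi, S.le_max' i hi⟩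
      · rintro ⟨ha, hb⟩; exact hdc _ hmax i ha hb
    rw [hS, Nat.card_Icc, Nat.add_sub_cancel]

lemma filter_eq_Icc_conjP (lam : ℕ → ℕ) (hmono : ∀ k, 1 ≤ k → lam (k + 1) ≤ lam k)
    (L j : ℕ) :
    (Finset.Icc 1 L).filter (fun i => j ≤ lam i) = Finset.Icc 1 (conjP lam L j) := by
  apply downclosed_eq_Icc
  · intro i hi
    simp only [Finset.mem_filter, Finset.mem_Icc] at hi
    exact hi.1.1
  · intro k hk i h1 hik
    simp only [Finset.mem_filter, Finset.mem_Icc] at *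
    exact ⟨⟨h1, le_trans hik hk.1.2⟩,
      le_trans hk.2 (anti_aux lam hmono i k h1 hik)⟩

lemma swap_sum {M : Type*} [AddCommMonoid M] (f : ℕ → ℕ) (L N : ℕ)
    (hfN : ∀ i ∈ Finset.Icc 1 L, f i ≤ N) (g : ℕ → ℕ → M) :
    ∑ i ∈ Finset.Icc 1 L, ∑ j ∈ Finset.Icc 1 (f i), g i j =
      ∑ j ∈ Finset.Icc 1 N, ∑ i ∈ (Finset.Icc 1 L).filter (fun i => j ≤ f i), g i j := by
  apply Finset.sum_comm'
  intro i j
  simp only [Finset.mem_Icc, Finset.mem_filter]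
  constructor
  · rintro ⟨⟨h1, h2⟩, h3, h4⟩
    exact ⟨⟨⟨h1, h2⟩, h4⟩, h3, le_trans h4 (hfN i (Finset.mem_Icc.2 ⟨h1, h2⟩))⟩
  · rintro ⟨⟨⟨h1, h2⟩, h3⟩, h4, h5⟩
    exact ⟨⟨h1, h2⟩, h4, h3⟩

lemma reflect_sum (c : ℕ) :
    ∑ i ∈ Finset.Icc 1 c, ((c : ℤ) - (i : ℤ)) = ∑ i ∈ Finset.Icc 1 c, ((i : ℤ) - 1) := by
  induction c with
  | zero => simp
  | succ n ih =>
    rw [Finset.sum_Icc_succ_top (by omega), Finset.sum_Icc_succ_top (by omega)]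
    have h2 : ∑ i ∈ Finset.Icc 1 n, ((((n : ℕ) + 1 : ℕ) : ℤ) - (i : ℤ))
        = ∑ i ∈ Finset.Icc 1 n, (((n : ℤ) - (i : ℤ)) + 1) := by
      apply Finset.sum_congr rfl; intro i _; push_cast; ring
    rw [h2, Finset.sum_add_distrib, ih, Finset.sum_const, Nat.card_Icc, Nat.add_sub_cancel]
    push_cast
    ring

lemma sumA (lam : ℕ → ℕ) (L : ℕ) (hmono : ∀ k, 1 ≤ k → lam (k + 1) ≤ lam k) :
    ∑ i ∈ Finset.Icc 1 L, ∑ j ∈ Finset.Icc 1 (lam i), ((j : ℤ) - 1) = (nconj lam L : ℤ) := by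
  have hbound : ∀ i ∈ Finset.Icc 1 L, lam i ≤ lam 1 := by
    intro i hi
    exact anti_aux lam hmono 1 i le_rfl (Finset.mem_Icc.1 hi).1
  rw [swap_sum lam L (lam 1) hbound]
  have hn : (nconj lam L : ℤ)
      = ∑ j ∈ Finset.Icc 1 (lam 1), ((j : ℤ) - 1) * (conjP lam L j : ℤ) := by
    unfold nconj
    push_cast
    apply Finset.sum_congr rfl
    intro j hj
    have h1 : 1 ≤ j := (Finset.mem_Icc.1 hj).1
    have : ((j - 1 : ℕ) : ℤ) = (j : ℤ) - 1 := by omega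
    rw [this]
  rw [hn]
  apply Finset.sum_congr rfl
  intro j _
  rw [Finset.sum_const, nsmul_eq_mul]
  unfold conjP
  ring

lemma sumB (lam : ℕ → ℕ) (L : ℕ) (hmono : ∀ k, 1 ≤ k → lam (k + 1) ≤ lam k) :
    ∑ i ∈ Finset.Icc 1 L, ∑ j ∈ Finset.Icc 1 (lam i), ((conjP lam L j : ℤ) - (i : ℤ))
      = (nP lam L : ℤ) := by
  have hbound : ∀ i ∈ Finset.Icc 1 L, lam i ≤ lam 1 := by
    intro i hi
    exact anti_aux lam hmono 1 i le_rfl (Finset.mem_Icc.1 hi).1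
  have hnp : (nP lam L : ℤ)
      = ∑ i ∈ Finset.Icc 1 L, ∑ j ∈ Finset.Icc 1 (lam i), ((i : ℤ) - 1) := by
    unfold nP
    push_cast
    apply Finset.sum_congr rfl
    intro i hi
    have h1 : 1 ≤ i := (Finset.mem_Icc.1 hi).1
    rw [Finset.sum_const, Nat.card_Icc, Nat.add_sub_cancel, nsmul_eq_mul]
    have : ((i - 1 : ℕ) : ℤ) = (i : ℤ) - 1 := by omega
    rw [this]
    ring
  rw [hnp, swap_sum lam L (lam 1) hbound, swap_sum lam L (lam 1) hbound]
  apply Finset.sum_congr rfl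
  intro j _
  rw [filter_eq_Icc_conjP lam hmono L j]
  exact reflect_sum (conjP lam L j)

lemma sumSize (lam : ℕ → ℕ) (L : ℕ) :
    ∑ i ∈ Finset.Icc 1 L, ∑ _j ∈ Finset.Icc 1 (lam i), (1 : ℤ) = (sizeP lam L : ℤ) := by
  unfold sizeP
  push_cast
  apply Finset.sum_congr rfl
  intro i _
  rw [Finset.sum_const, Nat.card_Icc, Nat.add_sub_cancel, nsmul_eq_mul, mul_one]

lemma Eq1lem (lam mu : ℕ → ℕ) (L : ℕ) (hmono : ∀ k, 1 ≤ k → lam (k + 1) ≤ lam k) :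
    ∑ i ∈ Finset.Icc 1 L, ∑ j ∈ Finset.Icc 1 (lam i), (-(mu i : ℤ) + (j : ℤ) - 1)
      = (nconj lam L : ℤ) - ∑ i ∈ Finset.Icc 1 L, (lam i : ℤ) * (mu i : ℤ) := by
  have h : ∀ i ∈ Finset.Icc 1 L, ∑ j ∈ Finset.Icc 1 (lam i), (-(mu i : ℤ) + (j : ℤ) - 1)
      = (∑ j ∈ Finset.Icc 1 (lam i), ((j : ℤ) - 1)) - (lam i : ℤ) * (mu i : ℤ) := by
    intro i _
    have h2 : ∀ j ∈ Finset.Icc 1 (lam i),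
        (-(mu i : ℤ) + (j : ℤ) - 1) = (((j : ℤ) - 1) - (mu i : ℤ)) := by intros; ring
    rw [Finset.sum_congr rfl h2, Finset.sum_sub_distrib, Finset.sum_const, Nat.card_Icc,
      Nat.add_sub_cancel, nsmul_eq_mul]
  rw [Finset.sum_congr rfl h, Finset.sum_sub_distrib, sumA lam L hmono]

lemma Et1lem (lam : ℕ → ℕ) (L : ℕ) (hmono : ∀ k, 1 ≤ k → lam (k + 1) ≤ lam k) :
    ∑ i ∈ Finset.Icc 1 L, ∑ j ∈ Finset.Icc 1 (lam i), (-(conjP lam L j : ℤ) + (i : ℤ))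
      = -(nP lam L : ℤ) := by
  have h : ∀ i ∈ Finset.Icc 1 L, ∑ j ∈ Finset.Icc 1 (lam i), (-(conjP lam L j : ℤ) + (i : ℤ))
      = -∑ j ∈ Finset.Icc 1 (lam i), ((conjP lam L j : ℤ) - (i : ℤ)) := by
    intro i _
    rw [← Finset.sum_neg_distrib]
    apply Finset.sum_congr rfl
    intros; ring
  rw [Finset.sum_congr rfl h, Finset.sum_neg_distrib]
  exact neg_inj.2 (sumB lam L hmono)

lemma Eq2lem (lam mu : ℕ → ℕ) (L : ℕ) (hmono' : ∀ k, 1 ≤ k → mu (k + 1) ≤ mu k) :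
    ∑ k ∈ Finset.Icc 1 L, ∑ l ∈ Finset.Icc 1 (mu k), ((lam k : ℤ) - (l : ℤ))
      = (∑ i ∈ Finset.Icc 1 L, (lam i : ℤ) * (mu i : ℤ)) - (nconj mu L : ℤ)
          - (sizeP mu L : ℤ) := by
  have h : ∀ k ∈ Finset.Icc 1 L, ∑ l ∈ Finset.Icc 1 (mu k), ((lam k : ℤ) - (l : ℤ))
      = (lam k : ℤ) * (mu k : ℤ)
        - ((∑ l ∈ Finset.Icc 1 (mu k), ((l : ℤ) - 1)) + ∑ _l ∈ Finset.Icc 1 (mu k), (1 : ℤ)) := by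
    intro k _
    have h2 : ∀ l ∈ Finset.Icc 1 (mu k),
        ((lam k : ℤ) - (l : ℤ)) = ((lam k : ℤ) - (((l : ℤ) - 1) + 1)) := by intros; ring
    rw [Finset.sum_congr rfl h2, ← Finset.sum_add_distrib, Finset.sum_sub_distrib,
      Finset.sum_const, Nat.card_Icc, Nat.add_sub_cancel, nsmul_eq_mul]
    ring
  rw [Finset.sum_congr rfl h, Finset.sum_sub_distrib, Finset.sum_add_distrib,
    sumA mu L hmono', sumSize mu L]
  ring

lemma Et2lem (mu : ℕ → ℕ) (L : ℕ) (hmono' : ∀ k, 1 ≤ k → mu (k + 1) ≤ mu k) :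
    ∑ k ∈ Finset.Icc 1 L, ∑ l ∈ Finset.Icc 1 (mu k), ((conjP mu L l : ℤ) - (k : ℤ) + 1)
      = (nP mu L : ℤ) + (sizeP mu L : ℤ) := by
  have h : ∀ k ∈ Finset.Icc 1 L, ∑ l ∈ Finset.Icc 1 (mu k), ((conjP mu L l : ℤ) - (k : ℤ) + 1)
      = (∑ l ∈ Finset.Icc 1 (mu k), ((conjP mu L l : ℤ) - (k : ℤ)))
        + ∑ _l ∈ Finset.Icc 1 (mu k), (1 : ℤ) := by
    intro k _
    rw [← Finset.sum_add_distrib]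
  rw [Finset.sum_congr rfl h, Finset.sum_add_distrib, sumB mu L hmono', sumSize mu L]

lemma prod_zpow_eq {ι : Type*} (a : K) (ha : a ≠ 0) (s : Finset ι) (f : ι → ℤ) :
    ∏ i ∈ s, a ^ f i = a ^ (∑ i ∈ s, f i) := by
  classical
  induction s using Finset.induction_on with
  | empty => simp
  | insert _ _ hi ih =>
    rw [Finset.prod_insert hi, Finset.sum_insert hi, zpow_add₀ ha, ih]

lemma prod_prod_zpow (a : K) (ha : a ≠ 0) (f : ℕ → ℕ) (L : ℕ) (g : ℕ → ℕ → ℤ) :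
    ∏ i ∈ Finset.Icc 1 L, ∏ j ∈ Finset.Icc 1 (f i), a ^ g i j
      = a ^ (∑ i ∈ Finset.Icc 1 L, ∑ j ∈ Finset.Icc 1 (f i), g i j) := by
  rw [← prod_zpow_eq a ha]
  exact Finset.prod_congr rfl fun i _ => prod_zpow_eq a ha _ _

lemma prod_prod_const (c : K) (f : ℕ → ℕ) (L : ℕ) :
    ∏ i ∈ Finset.Icc 1 L, ∏ _j ∈ Finset.Icc 1 (f i), c
      = c ^ (∑ i ∈ Finset.Icc 1 L, f i) := by
  rw [← Finset.prod_pow_eq_pow_sum]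
  apply Finset.prod_congr rfl
  intro i _
  rw [Finset.prod_const, Nat.card_Icc, Nat.add_sub_cancel]

lemma key_factor (Q T x q t : K) (hQ : Q ≠ 0) (hT : T ≠ 0) (hx : x ≠ 0)
    (hq : q = Q ^ 2) (ht : t = T ^ 2) (A B A' B' : ℤ)
    (hA : A' = -A - 1) (hB : B' = -B + 1) :
    1 - Q / T * x * q ^ A * t ^ B =
      (-(Q / T * x)) * q ^ A * t ^ B * (1 - Q / T * x⁻¹ * q ^ A' * t ^ B') := by
  have hq0 : q ≠ 0 := by rw [hq]; exact pow_ne_zero _ hQ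
  have ht0 : t ≠ 0 := by rw [ht]; exact pow_ne_zero _ hT
  have key : (Q / T * x * q ^ A * t ^ B) * (Q / T * x⁻¹ * q ^ A' * t ^ B') = 1 := by
    subst hA hB
    have e1 : q ^ A * q ^ (-A - 1) = q⁻¹ := by
      rw [← zpow_add₀ hq0, show A + (-A - 1) = -1 by ring, zpow_neg_one]
    have e2 : t ^ B * t ^ (-B + 1) = t := by
      rw [← zpow_add₀ ht0, show B + (-B + 1) = 1 by ring, zpow_one]
    calc (Q / T * x * q ^ A * t ^ B) * (Q / T * x⁻¹ * q ^ (-A - 1) * t ^ (-B + 1))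
        = (Q / T) * (Q / T) * (x * x⁻¹) * (q ^ A * q ^ (-A - 1)) * (t ^ B * t ^ (-B + 1)) := by
          ring
      _ = 1 := by
          rw [e1, e2, mul_inv_cancel₀ hx, hq, ht]
          field_simp
  linear_combination -key

lemma scalar_id (Q T x : K) (hQ : Q ≠ 0) (hT : T ≠ 0) (hx : x ≠ 0)
    (q t : K) (hq : q = Q ^ 2) (ht : t = T ^ 2)
    (n1 n2 p1 p2 c1 c2 : ℕ) (S : ℤ) :
    ((-(Q / T * x)) ^ n1 * q ^ ((c1 : ℤ) - S) * t ^ (-(p1 : ℤ))) *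
      ((-(Q / T * x)) ^ n2 * q ^ (S - (c2 : ℤ) - (n2 : ℤ)) * t ^ ((p2 : ℤ) + (n2 : ℤ)))
    = x ^ (n1 + n2) *
        ((-1 : K) ^ n1 * q ^ c1 * Q ^ n1 * t ^ (-(p1 : ℤ)) * T ^ (-(n1 : ℤ))) *
        ((-1 : K) ^ n2 * q ^ c2 * Q ^ n2 * t ^ (-(p2 : ℤ)) * T ^ (-(n2 : ℤ)))⁻¹ := by
  subst hq ht
  have negQTx_pow : ∀ n : ℕ, (-(Q / T * x)) ^ n
      = (-1 : K) ^ n * Q ^ (n : ℤ) * T ^ (-(n : ℤ)) * x ^ n := by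
    intro n
    have hTn : (T ^ n)⁻¹ = T ^ (-(n : ℤ)) := by
      rw [← zpow_natCast T n, ← zpow_neg]
    calc (-(Q / T * x)) ^ n = (-1 : K) ^ n * ((Q / T) ^ n * x ^ n) := by
          rw [← neg_one_mul, mul_pow, mul_pow]
      _ = (-1 : K) ^ n * (Q ^ n * (T ^ n)⁻¹ * x ^ n) := by
          rw [div_pow, div_eq_mul_inv]
      _ = _ := by rw [hTn, ← zpow_natCast Q n]; ring
  have sq_zpow : ∀ (a : K), a ≠ 0 → ∀ e : ℤ, ((a ^ 2 : K) ^ e) = a ^ (2 * e) := by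
    intro a ha e
    rw [← zpow_natCast a 2, ← zpow_mul]
    norm_num
  have sq_pow : ∀ (a : K) (c : ℕ), ((a ^ 2 : K) ^ c) = a ^ ((2 * c : ℕ) : ℤ) := by
    intro a c
    rw [← pow_mul, ← zpow_natCast]
  have frameQ : ∀ (n p c : ℕ),
      (-1 : K) ^ n * (Q ^ 2 : K) ^ c * Q ^ n * (T ^ 2 : K) ^ (-(p : ℤ)) * T ^ (-(n : ℤ))
        = (-1 : K) ^ n * Q ^ (2 * (c : ℤ)) * Q ^ ((n : ℤ)) * T ^ (2 * (-(p : ℤ)))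
            * T ^ (-(n : ℤ)) := by
    intro n p c
    rw [sq_pow Q c, sq_zpow T hT, ← zpow_natCast Q n,
      show ((2 * c : ℕ) : ℤ) = 2 * (c : ℤ) by push_cast; ring]
  have hinv5 : ∀ (n : ℕ) (a b c d : ℤ),
      ((-1 : K) ^ n * Q ^ a * Q ^ b * T ^ c * T ^ d)⁻¹
        = (-1 : K) ^ n * Q ^ (-a) * Q ^ (-b) * T ^ (-c) * T ^ (-d) := by
    intro n a b c d
    rw [mul_inv, mul_inv, mul_inv, mul_inv, ← zpow_neg, ← zpow_neg, ← zpow_neg, ← zpow_neg,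
      ← inv_pow, inv_neg_one]
  have hLHS : ((-(Q / T * x)) ^ n1 * (Q ^ 2 : K) ^ ((c1 : ℤ) - S) * (T ^ 2 : K) ^ (-(p1 : ℤ))) *
      ((-(Q / T * x)) ^ n2 * (Q ^ 2 : K) ^ (S - (c2 : ℤ) - (n2 : ℤ))
        * (T ^ 2 : K) ^ ((p2 : ℤ) + (n2 : ℤ)))
      = (-1 : K) ^ (n1 + n2) * x ^ (n1 + n2) *
          Q ^ ((n1 : ℤ) - (n2 : ℤ) + 2 * (c1 : ℤ) - 2 * (c2 : ℤ)) *
          T ^ (-(n1 : ℤ) + (n2 : ℤ) - 2 * (p1 : ℤ) + 2 * (p2 : ℤ)) := by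
    calc ((-(Q / T * x)) ^ n1 * (Q ^ 2 : K) ^ ((c1 : ℤ) - S) * (T ^ 2 : K) ^ (-(p1 : ℤ))) *
        ((-(Q / T * x)) ^ n2 * (Q ^ 2 : K) ^ (S - (c2 : ℤ) - (n2 : ℤ))
          * (T ^ 2 : K) ^ ((p2 : ℤ) + (n2 : ℤ)))
        = ((-1 : K) ^ n1 * (-1 : K) ^ n2) * (x ^ n1 * x ^ n2) *
            ((Q ^ (n1 : ℤ) * Q ^ (2 * ((c1 : ℤ) - S))) *
              (Q ^ (n2 : ℤ) * Q ^ (2 * (S - (c2 : ℤ) - (n2 : ℤ))))) *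
            ((T ^ (-(n1 : ℤ)) * T ^ (2 * (-(p1 : ℤ)))) *
              (T ^ (-(n2 : ℤ)) * T ^ (2 * ((p2 : ℤ) + (n2 : ℤ))))) := by
          rw [negQTx_pow n1, negQTx_pow n2, sq_zpow Q hQ, sq_zpow Q hQ, sq_zpow T hT,
            sq_zpow T hT]
          ring
      _ = ((-1 : K) ^ n1 * (-1 : K) ^ n2) * (x ^ n1 * x ^ n2) *
            Q ^ (((n1 : ℤ) + 2 * ((c1 : ℤ) - S)) + ((n2 : ℤ) + 2 * (S - (c2 : ℤ) - (n2 : ℤ)))) *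
            T ^ ((-(n1 : ℤ) + 2 * (-(p1 : ℤ))) + (-(n2 : ℤ) + 2 * ((p2 : ℤ) + (n2 : ℤ)))) := by
          rw [← zpow_add₀ hQ, ← zpow_add₀ hQ, ← zpow_add₀ hQ, ← zpow_add₀ hT, ← zpow_add₀ hT,
            ← zpow_add₀ hT]
      _ = _ := by
          rw [← pow_add, ← pow_add,
            show (((n1 : ℤ) + 2 * ((c1 : ℤ) - S)) + ((n2 : ℤ) + 2 * (S - (c2 : ℤ) - (n2 : ℤ))))
              = (n1 : ℤ) - (n2 : ℤ) + 2 * (c1 : ℤ) - 2 * (c2 : ℤ) by ring,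
            show ((-(n1 : ℤ) + 2 * (-(p1 : ℤ))) + (-(n2 : ℤ) + 2 * ((p2 : ℤ) + (n2 : ℤ))))
              = -(n1 : ℤ) + (n2 : ℤ) - 2 * (p1 : ℤ) + 2 * (p2 : ℤ) by ring]
  have hRHS : x ^ (n1 + n2) *
        ((-1 : K) ^ n1 * (Q ^ 2 : K) ^ c1 * Q ^ n1 * (T ^ 2 : K) ^ (-(p1 : ℤ))
          * T ^ (-(n1 : ℤ))) *
        ((-1 : K) ^ n2 * (Q ^ 2 : K) ^ c2 * Q ^ n2 * (T ^ 2 : K) ^ (-(p2 : ℤ))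
          * T ^ (-(n2 : ℤ)))⁻¹
      = (-1 : K) ^ (n1 + n2) * x ^ (n1 + n2) *
          Q ^ ((n1 : ℤ) - (n2 : ℤ) + 2 * (c1 : ℤ) - 2 * (c2 : ℤ)) *
          T ^ (-(n1 : ℤ) + (n2 : ℤ) - 2 * (p1 : ℤ) + 2 * (p2 : ℤ)) := by
    calc x ^ (n1 + n2) *
        ((-1 : K) ^ n1 * (Q ^ 2 : K) ^ c1 * Q ^ n1 * (T ^ 2 : K) ^ (-(p1 : ℤ))
          * T ^ (-(n1 : ℤ))) *
        ((-1 : K) ^ n2 * (Q ^ 2 : K) ^ c2 * Q ^ n2 * (T ^ 2 : K) ^ (-(p2 : ℤ))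
          * T ^ (-(n2 : ℤ)))⁻¹
        = ((-1 : K) ^ n1 * (-1 : K) ^ n2) * (x ^ n1 * x ^ n2) *
            ((Q ^ (2 * (c1 : ℤ)) * Q ^ ((n1 : ℤ))) *
              (Q ^ (-(2 * (c2 : ℤ))) * Q ^ (-(n2 : ℤ)))) *
            ((T ^ (2 * (-(p1 : ℤ))) * T ^ (-(n1 : ℤ))) *
              (T ^ (-(2 * (-(p2 : ℤ)))) * T ^ (-(-(n2 : ℤ))))) := by
          rw [frameQ n1 p1 c1, frameQ n2 p2 c2, hinv5 n2, pow_add]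
          ring
      _ = ((-1 : K) ^ n1 * (-1 : K) ^ n2) * (x ^ n1 * x ^ n2) *
            Q ^ ((2 * (c1 : ℤ) + (n1 : ℤ)) + (-(2 * (c2 : ℤ)) + -(n2 : ℤ))) *
            T ^ ((2 * (-(p1 : ℤ)) + -(n1 : ℤ)) + (-(2 * (-(p2 : ℤ))) + -(-(n2 : ℤ)))) := by
          rw [← zpow_add₀ hQ, ← zpow_add₀ hQ, ← zpow_add₀ hQ, ← zpow_add₀ hT, ← zpow_add₀ hT,
            ← zpow_add₀ hT]
      _ = _ := by
          rw [← pow_add, ← pow_add,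
            show ((2 * (c1 : ℤ) + (n1 : ℤ)) + (-(2 * (c2 : ℤ)) + -(n2 : ℤ)))
              = (n1 : ℤ) - (n2 : ℤ) + 2 * (c1 : ℤ) - 2 * (c2 : ℤ) by ring,
            show ((2 * (-(p1 : ℤ)) + -(n1 : ℤ)) + (-(2 * (-(p2 : ℤ))) + -(-(n2 : ℤ))))
              = -(n1 : ℤ) + (n2 : ℤ) - 2 * (p1 : ℤ) + 2 * (p2 : ℤ) by ring]
  exact hLHS.trans hRHS.symm

end Aux

theorem stmt11 {K : Type*} [Field K] (Q T x : K)
    (hQ : Q ≠ 0) (hT : T ≠ 0) (hx : x ≠ 0)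
    (q t : K) (hq : q = Q ^ 2) (ht : t = T ^ 2)
    (lam mu : ℕ → ℕ) (L : ℕ)
    (hmono : ∀ k, 1 ≤ k → lam (k + 1) ≤ lam k)
    (hmono' : ∀ k, 1 ≤ k → mu (k + 1) ≤ mu k)
    (hL : ∀ k, L < k → lam k = 0)
    (hL' : ∀ k, L < k → mu k = 0) :
    Nek q t lam mu L (Q / T * x) =
      Nek q t mu lam L (Q / T * x⁻¹) * x ^ (sizeP lam L + sizeP mu L) *
        framing q t Q T lam L * (framing q t Q T mu L)⁻¹ := by
  have hq0 : q ≠ 0 := by rw [hq]; exact pow_ne_zero _ hQ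
  have ht0 : t ≠ 0 := by rw [ht]; exact pow_ne_zero _ hT
  -- Split the first product of Nek λ μ
  have h1 : (∏ i ∈ Finset.Icc 1 L, ∏ j ∈ Finset.Icc 1 (lam i),
      (1 - Q / T * x * q ^ (-(mu i : ℤ) + (j : ℤ) - 1)
        * t ^ (-(conjP lam L j : ℤ) + (i : ℤ))))
    = (∏ i ∈ Finset.Icc 1 L, ∏ j ∈ Finset.Icc 1 (lam i),
        ((-(Q / T * x)) * q ^ (-(mu i : ℤ) + (j : ℤ) - 1)
          * t ^ (-(conjP lam L j : ℤ) + (i : ℤ)))) *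
      (∏ k ∈ Finset.Icc 1 L, ∏ l ∈ Finset.Icc 1 (lam k),
        (1 - Q / T * x⁻¹ * q ^ ((mu k : ℤ) - (l : ℤ))
          * t ^ ((conjP lam L l : ℤ) - (k : ℤ) + 1))) := by
    rw [← Finset.prod_mul_distrib]
    apply Finset.prod_congr rfl
    intro i _
    rw [← Finset.prod_mul_distrib]
    apply Finset.prod_congr rfl
    intro j _
    exact key_factor Q T x q t hQ hT hx hq ht _ _ _ _ (by ring) (by ring)
  -- Split the second product of Nek λ μ
  have h2 : (∏ k ∈ Finset.Icc 1 L, ∏ l ∈ Finset.Icc 1 (mu k),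
      (1 - Q / T * x * q ^ ((lam k : ℤ) - (l : ℤ))
        * t ^ ((conjP mu L l : ℤ) - (k : ℤ) + 1)))
    = (∏ k ∈ Finset.Icc 1 L, ∏ l ∈ Finset.Icc 1 (mu k),
        ((-(Q / T * x)) * q ^ ((lam k : ℤ) - (l : ℤ))
          * t ^ ((conjP mu L l : ℤ) - (k : ℤ) + 1))) *
      (∏ i ∈ Finset.Icc 1 L, ∏ j ∈ Finset.Icc 1 (mu i),
        (1 - Q / T * x⁻¹ * q ^ (-(lam i : ℤ) + (j : ℤ) - 1)
          * t ^ (-(conjP mu L j : ℤ) + (i : ℤ)))) := by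
    rw [← Finset.prod_mul_distrib]
    apply Finset.prod_congr rfl
    intro k _
    rw [← Finset.prod_mul_distrib]
    apply Finset.prod_congr rfl
    intro l _
    exact key_factor Q T x q t hQ hT hx hq ht _ _ _ _ (by ring) (by ring)
  -- Evaluate the two monomial products
  have hC1 : (∏ i ∈ Finset.Icc 1 L, ∏ j ∈ Finset.Icc 1 (lam i),
      ((-(Q / T * x)) * q ^ (-(mu i : ℤ) + (j : ℤ) - 1)
        * t ^ (-(conjP lam L j : ℤ) + (i : ℤ))))
    = (-(Q / T * x)) ^ sizeP lam L *
        q ^ ((nconj lam L : ℤ) - ∑ i ∈ Finset.Icc 1 L, (lam i : ℤ) * (mu i : ℤ)) *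
        t ^ (-(nP lam L : ℤ)) := by
    simp only [Finset.prod_mul_distrib]
    rw [prod_prod_const, prod_prod_zpow q hq0, prod_prod_zpow t ht0,
      Eq1lem lam mu L hmono, Et1lem lam L hmono]
    rfl
  have hC2 : (∏ k ∈ Finset.Icc 1 L, ∏ l ∈ Finset.Icc 1 (mu k),
      ((-(Q / T * x)) * q ^ ((lam k : ℤ) - (l : ℤ))
        * t ^ ((conjP mu L l : ℤ) - (k : ℤ) + 1)))
    = (-(Q / T * x)) ^ sizeP mu L *
        q ^ ((∑ i ∈ Finset.Icc 1 L, (lam i : ℤ) * (mu i : ℤ)) - (nconj mu L : ℤ)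
          - (sizeP mu L : ℤ)) *
        t ^ ((nP mu L : ℤ) + (sizeP mu L : ℤ)) := by
    simp only [Finset.prod_mul_distrib]
    rw [prod_prod_const, prod_prod_zpow q hq0, prod_prod_zpow t ht0,
      Eq2lem lam mu L hmono', Et2lem mu L hmono']
    rfl
  have hscalar := scalar_id Q T x hQ hT hx q t hq ht (sizeP lam L) (sizeP mu L)
    (nP lam L) (nP mu L) (nconj lam L) (nconj mu L)
    (∑ i ∈ Finset.Icc 1 L, (lam i : ℤ) * (mu i : ℤ))
  simp only [Nek, framing]
  rw [h1, h2, hC1, hC2]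
  calc _ = ((∏ i ∈ Finset.Icc 1 L, ∏ j ∈ Finset.Icc 1 (mu i),
        (1 - Q / T * x⁻¹ * q ^ (-(lam i : ℤ) + (j : ℤ) - 1)
          * t ^ (-(conjP mu L j : ℤ) + (i : ℤ)))) *
      (∏ k ∈ Finset.Icc 1 L, ∏ l ∈ Finset.Icc 1 (lam k),
        (1 - Q / T * x⁻¹ * q ^ ((mu k : ℤ) - (l : ℤ))
          * t ^ ((conjP lam L l : ℤ) - (k : ℤ) + 1)))) *
      (((-(Q / T * x)) ^ sizeP lam L *
        q ^ ((nconj lam L : ℤ) - ∑ i ∈ Finset.Icc 1 L, (lam i : ℤ) * (mu i : ℤ)) *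
        t ^ (-(nP lam L : ℤ))) *
      ((-(Q / T * x)) ^ sizeP mu L *
        q ^ ((∑ i ∈ Finset.Icc 1 L, (lam i : ℤ) * (mu i : ℤ)) - (nconj mu L : ℤ)
          - (sizeP mu L : ℤ)) *
        t ^ ((nP mu L : ℤ) + (sizeP mu L : ℤ)))) := by ring
    _ = _ := by
      rw [hscalar]
      ring
  done

end
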